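/- Let c, p ∈ [1,∞), let d ∈ ℕ, and let V : ℝ^d → ℝ be a continuously differentiable function satisfying ‖(∇V)(x)‖ ≤ c |V(x)|^{1 - 1/p} for Lebesgue-almost all x ∈ ℝ^d. Then V(x + y) ≤ c^p 2^{p-1} (|V(x)| + ‖y‖^p) for all x, y ∈ ℝ^d. -/

import Mathlib

open MeasureTheory Filter

lemma two_rpow (a b p : ℝ) (ha : 0 ≤ a) (hb : 0 ≤ b) (hp : 1 ≤ p) :
    (a + b) ^ p ≤ 2 ^ (p - 1) * (a ^ p + b ^ p) := by
  have h := NNReal.coe_le_coe.2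
    (NNReal.rpow_add_le_mul_rpow_add_rpow a.toNNReal b.toNNReal hp)
  push_cast at h
  simpa [Real.coe_toNNReal a ha, Real.coe_toNNReal b hb] using h

lemma key1d (p L : ℝ) (hp : 1 ≤ p) (hL : 0 ≤ L) (g g' : ℝ → ℝ)
    (hg : ∀ t, HasDerivAt g (g' t) t)
    (hb : ∀ t, |g' t| ≤ L * |g t| ^ (1 - 1 / p)) :
    |g 1| ≤ (|g 0| ^ (1 / p) + L / p) ^ p := by
  have hp0 : 0 < p := lt_of_lt_of_le one_pos hp
  set s : ℝ := 1 / (2 * p) with hs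
  have hs0 : 0 < s := by positivity
  -- ε-regularized claim
  have claim : ∀ ε ∈ Set.Ioi (0:ℝ),
      |g 1| ≤ ((g 0 ^ 2 + ε) ^ s + L / p) ^ p := by
    intro ε hε
    have hε' : (0:ℝ) < ε := hε
    have hqpos : ∀ t, (0:ℝ) < g t ^ 2 + ε := fun t => by positivity
    set q : ℝ → ℝ := fun t => g t ^ 2 + ε with hqdef
    have hq : ∀ t, HasDerivAt q (2 * g t * g' t) t := by
      intro t
      have := ((hg t).pow 2).add_const ε
      exact this.congr_deriv (by simp)
    set v : ℝ → ℝ := fun t => q t ^ s with hvdef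
    have hv : ∀ t, HasDerivAt v (2 * g t * g' t * s * q t ^ (s - 1)) t :=
      fun t => (hq t).rpow_const (Or.inl (hqpos t).ne')
    -- derivative bound
    have hvb : ∀ t, ‖2 * g t * g' t * s * q t ^ (s - 1)‖ ≤ L / p := by
      intro t
      have hq0 : (0:ℝ) < q t := hqpos t
      have h1 : |g t| ^ (2 - 1 / p) ≤ q t ^ (1 - s) := by
        have e1 : |g t| ^ (2 - 1 / p) = (g t ^ 2) ^ (1 - s) := by
          rw [← sq_abs, ← Real.rpow_natCast_mul (abs_nonneg _) 2 (1 - s)]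
          norm_num [hs]
          ring_nf
        rw [e1]
        exact Real.rpow_le_rpow (sq_nonneg _) (by simp [hqdef, hε'.le]) (by
          have : 1 / p ≤ 1 := by
            rw [div_le_one hp0]; exact hp
          have h2p : 1/(2*p) ≤ 1/2 := by
            apply one_div_le_one_div_of_le <;> linarith
          simp only [hs]; linarith)
      have h2 : |g t| * |g' t| ≤ L * q t ^ (1 - s) := by
        calc |g t| * |g' t| ≤ |g t| * (L * |g t| ^ (1 - 1 / p)) :=
              mul_le_mul_of_nonneg_left (hb t) (abs_nonneg _)
          _ = L * (|g t| ^ (1:ℝ) * |g t| ^ (1 - 1 / p)) := by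
              rw [Real.rpow_one]; ring
          _ = L * |g t| ^ (2 - 1 / p) := by
              rw [← Real.rpow_add' (abs_nonneg _) (by
                have : p⁻¹ ≤ 1 := inv_le_one_of_one_le₀ hp
                intro h; norm_num at h; linarith)]
              ring_nf
          _ ≤ L * q t ^ (1 - s) := mul_le_mul_of_nonneg_left h1 hL
      calc ‖2 * g t * g' t * s * q t ^ (s - 1)‖
          = (2 * s) * (q t ^ (s - 1) * (|g t| * |g' t|)) := by
            simp only [Real.norm_eq_abs, abs_mul]
            rw [abs_of_nonneg hs0.le, abs_of_nonneg (Real.rpow_nonneg hq0.le _), abs_two]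
            ring
        _ ≤ (2 * s) * (q t ^ (s - 1) * (L * q t ^ (1 - s))) := by
            apply mul_le_mul_of_nonneg_left _ (by positivity)
            exact mul_le_mul_of_nonneg_left h2 (Real.rpow_nonneg hq0.le _)
        _ = (2 * s) * L * (q t ^ (s - 1) * q t ^ (1 - s)) := by ring
        _ = (2 * s) * L := by
            rw [← Real.rpow_add hq0]
            norm_num
        _ = L / p := by
            rw [hs]; field_simp
    -- mean value inequality
    have mvt := convex_univ.norm_image_sub_le_of_norm_hasDerivWithin_le
      (f := v) (f' := fun t => 2 * g t * g' t * s * q t ^ (s - 1)) (C := L / p)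
      (fun t _ => (hv t).hasDerivWithinAt) (fun t _ => hvb t)
      (Set.mem_univ (0:ℝ)) (Set.mem_univ (1:ℝ))
    have hv1 : v 1 ≤ v 0 + L / p := by
      have : |v 1 - v 0| ≤ L / p := by simpa [Real.norm_eq_abs] using mvt
      linarith [abs_le.1 this |>.2]
    -- conclude
    have e2 : |g 1| ≤ (q 1) ^ ((1:ℝ)/2) := by
      have : |g 1| = (g 1 ^ 2) ^ ((1:ℝ)/2) := by
        rw [← sq_abs, ← Real.rpow_natCast_mul (abs_nonneg _) 2 (1/2)]
        norm_num
      rw [this]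
      exact Real.rpow_le_rpow (sq_nonneg _) (by simp [hqdef, hε'.le]) (by norm_num)
    have e3 : (q 1) ^ ((1:ℝ)/2) = (v 1) ^ p := by
      show q 1 ^ ((1:ℝ)/2) = (q 1 ^ s) ^ p
      rw [← Real.rpow_mul (hqpos 1).le]
      congr 1
      rw [hs]; field_simp
    calc |g 1| ≤ q 1 ^ ((1:ℝ)/2) := e2
      _ = (v 1) ^ p := e3
      _ ≤ (v 0 + L / p) ^ p :=
          Real.rpow_le_rpow (Real.rpow_nonneg (hqpos 1).le _) hv1 hp0.le
      _ = ((g 0 ^ 2 + ε) ^ s + L / p) ^ p := rfl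
  -- pass to the limit ε → 0⁺
  have h0 : |g 0| ^ (1 / p) = (g 0 ^ 2) ^ s := by
    rw [← sq_abs, ← Real.rpow_natCast_mul (abs_nonneg _) 2 s]
    norm_num [hs]
    ring_nf
  have hc : ContinuousAt (fun ε : ℝ => ((g 0 ^ 2 + ε) ^ s + L / p) ^ p) 0 := by
    apply ContinuousAt.rpow_const
    · exact ((continuousAt_const.add continuousAt_id).rpow_const
        (Or.inr hs0.le)).add continuousAt_const
    · exact Or.inr hp0.le
  have hlim : Tendsto (fun ε : ℝ => ((g 0 ^ 2 + ε) ^ s + L / p) ^ p)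
      (nhdsWithin 0 (Set.Ioi 0)) (nhds ((|g 0| ^ (1 / p) + L / p) ^ p)) := by
    rw [h0]
    have := hc.continuousWithinAt (s := Set.Ioi 0)
    simpa [ContinuousWithinAt] using this
  exact ge_of_tendsto hlim (Filter.eventually_of_mem self_mem_nhdsWithin claim)

open MeasureTheory Filter in
/-- Growth estimate for a `C¹` Lyapunov-type function whose gradient satisfies
`‖∇V(x)‖ ≤ c |V(x)|^{1-1/p}` for Lebesgue-almost all `x`. -/
theorem stmt7 {d : ℕ} (c p : ℝ) (hc : 1 ≤ c) (hp : 1 ≤ p)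
    (V : EuclideanSpace ℝ (Fin d) → ℝ) (hV : ContDiff ℝ 1 V)
    (hgrad : ∀ᵐ x ∂(volume : Measure (EuclideanSpace ℝ (Fin d))),
      ‖fderiv ℝ V x‖ ≤ c * |V x| ^ (1 - 1 / p)) :
    ∀ x y : EuclideanSpace ℝ (Fin d),
      V (x + y) ≤ c ^ p * 2 ^ (p - 1) * (|V x| + ‖y‖ ^ p) := by
  have hp0 : 0 < p := lt_of_lt_of_le one_pos hp
  have hc0 : 0 < c := lt_of_lt_of_le one_pos hc
  have hexp : (0:ℝ) ≤ 1 - 1 / p := by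
    have : 1 / p ≤ 1 := by rw [div_le_one hp0]; exact hp
    linarith
  -- upgrade the a.e. bound to an everywhere bound by continuity
  have hbd : ∀ z, ‖fderiv ℝ V z‖ ≤ c * |V z| ^ (1 - 1 / p) := by
    by_contra hcon
    push_neg at hcon
    obtain ⟨z₀, hz₀⟩ := hcon
    set S : Set (EuclideanSpace ℝ (Fin d)) :=
      {z | c * |V z| ^ (1 - 1 / p) < ‖fderiv ℝ V z‖} with hS
    have hSopen : IsOpen S := by
      apply isOpen_lt
      · exact continuous_const.mul
          ((hV.continuous.abs).rpow_const (fun z => Or.inr hexp))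
      · exact (hV.continuous_fderiv one_ne_zero).norm
    have hSpos : 0 < volume S := hSopen.measure_pos volume ⟨z₀, hz₀⟩
    have hS0 : volume S = 0 := by
      have : S ⊆ {z | ¬ ‖fderiv ℝ V z‖ ≤ c * |V z| ^ (1 - 1 / p)} :=
        fun z hz => not_le.2 hz
      exact measure_mono_null this hgrad
    exact absurd hS0 hSpos.ne'
  intro x y
  -- one-dimensional reduction
  set g : ℝ → ℝ := fun t => V (x + t • y) with hgdef
  set g' : ℝ → ℝ := fun t => fderiv ℝ V (x + t • y) y with hg'def
  have hg : ∀ t, HasDerivAt g (g' t) t := by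
    intro t
    have hline : HasDerivAt (fun t : ℝ => x + t • y) y t := by
      simpa using ((hasDerivAt_id t).smul_const y).const_add x
    exact ((hV.differentiable one_ne_zero (x + t • y)).hasFDerivAt).comp_hasDerivAt t hline
  have hb : ∀ t, |g' t| ≤ (c * ‖y‖) * |g t| ^ (1 - 1 / p) := by
    intro t
    calc |g' t| ≤ ‖fderiv ℝ V (x + t • y)‖ * ‖y‖ :=
          (fderiv ℝ V (x + t • y)).le_opNorm y
      _ ≤ (c * |V (x + t • y)| ^ (1 - 1 / p)) * ‖y‖ :=
          mul_le_mul_of_nonneg_right (hbd _) (norm_nonneg _)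
      _ = (c * ‖y‖) * |g t| ^ (1 - 1 / p) := by rw [hgdef]; ring
  have key := key1d p (c * ‖y‖) hp (by positivity) g g' hg hb
  have hg1 : g 1 = V (x + y) := by simp [hgdef]
  have hg0 : g 0 = V x := by simp [hgdef]
  rw [hg1, hg0] at key
  -- assemble the final estimate
  have A0 : (0:ℝ) ≤ |V x| ^ (1 / p) := Real.rpow_nonneg (abs_nonneg _) _
  have B0 : (0:ℝ) ≤ c * ‖y‖ / p := by positivity
  have step1 : V (x + y) ≤ (|V x| ^ (1 / p) + c * ‖y‖ / p) ^ p :=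
    le_trans (le_abs_self _) key
  have step2 : (|V x| ^ (1 / p) + c * ‖y‖ / p) ^ p ≤
      2 ^ (p - 1) * ((|V x| ^ (1 / p)) ^ p + (c * ‖y‖ / p) ^ p) :=
    two_rpow _ _ p A0 B0 hp
  have e1 : (|V x| ^ (1 / p)) ^ p = |V x| := by
    rw [← Real.rpow_mul (abs_nonneg _)]
    field_simp
    simp
  have e2 : (c * ‖y‖ / p) ^ p ≤ c ^ p * ‖y‖ ^ p := by
    calc (c * ‖y‖ / p) ^ p ≤ (c * ‖y‖) ^ p := by
          apply Real.rpow_le_rpow B0 _ hp0.le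
          rw [div_le_iff₀ hp0]
          nlinarith [norm_nonneg y, mul_nonneg hc0.le (norm_nonneg y)]
      _ = c ^ p * ‖y‖ ^ p := Real.mul_rpow hc0.le (norm_nonneg y)
  have hcp1 : (1:ℝ) ≤ c ^ p := Real.one_le_rpow hc hp0.le
  have h2p : (0:ℝ) ≤ 2 ^ (p - 1) := Real.rpow_nonneg (by norm_num) _
  calc V (x + y) ≤ 2 ^ (p - 1) * ((|V x| ^ (1 / p)) ^ p + (c * ‖y‖ / p) ^ p) :=
        le_trans step1 step2
    _ ≤ 2 ^ (p - 1) * (|V x| + c ^ p * ‖y‖ ^ p) := by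
        rw [e1]
        exact mul_le_mul_of_nonneg_left (by linarith [e2]) h2p
    _ ≤ c ^ p * 2 ^ (p - 1) * (|V x| + ‖y‖ ^ p) := by
        have hyp : (0:ℝ) ≤ ‖y‖ ^ p := Real.rpow_nonneg (norm_nonneg y) _
        have hVx : (0:ℝ) ≤ |V x| := abs_nonneg _
        nlinarith [mul_nonneg h2p hVx, mul_nonneg h2p hyp]
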